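/- Define f(x) = inf over positive integers n of n · x^{1/n} for real x > 1, and let ‖y‖ denote the distance from the real number y to the nearest integer. Then there exist constants C > 0 and x₀ > 1 such that for all x ≥ x₀, | f(x) − e·ln x − e·‖ln x‖² / (2 ln x) | ≤ C / (ln x)². -/

import Mathlib

open Real

lemma sum4_eq (u : ℝ) : ∑ m ∈ Finset.range 4, u ^ m / m.factorial = 1 + u + u^2/2 + u^3/6 := by
  simp [Finset.sum_range_succ, Nat.factorial]

lemma exp_cubic_bound {u : ℝ} (hu : |u| ≤ 1) :
    |Real.exp u - (1 + u + u^2/2 + u^3/6)| ≤ 5/96 * u^4 := by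
  have h := Real.exp_bound hu (n := 4) (by norm_num)
  rw [sum4_eq] at h
  have h2 : |u|^4 * ((Nat.succ 4 : ℝ)/((Nat.factorial 4 : ℝ) * (4:ℕ))) = 5/96 * u^4 := by
    rw [← abs_pow, abs_of_nonneg (by positivity : (0:ℝ) ≤ u^4)]
    norm_num [Nat.factorial]
    ring
  calc |Real.exp u - (1 + u + u^2/2 + u^3/6)| ≤ _ := h
    _ = 5/96 * u^4 := h2

lemma cubic_le_exp {u : ℝ} (hu : 0 ≤ u) : 1 + u + u^2/2 + u^3/6 ≤ Real.exp u := by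
  have h := Real.sum_le_exp_of_nonneg hu 4
  rw [sum4_eq] at h
  exact h

set_option maxHeartbeats 2000000 in
lemma lower_bound {t n δ : ℝ} (ht : 2 ≤ t) (hn : 1 ≤ n) (hδ : |δ| ≤ 1/2)
    (hd : δ^2 ≤ (t - n)^2) :
    Real.exp 1 * t + Real.exp 1 * δ^2 / (2*t) - 9/t^2 ≤ n * Real.exp (t/n) := by
  have ht0 : (0:ℝ) < t := by linarith
  have hn0 : (0:ℝ) < n := by linarith
  have hE1 : Real.exp 1 < 2.7182818286 := Real.exp_one_lt_d9
  have hE0 : (0:ℝ) < Real.exp 1 := Real.exp_pos 1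
  have hδ2 : δ^2 ≤ 1/4 := by
    nlinarith [abs_nonneg δ, sq_abs δ]
  obtain ⟨u, hu_def⟩ : ∃ u, u = (t - n)/n := ⟨_, rfl⟩
  have hexp : Real.exp (t/n) = Real.exp 1 * Real.exp u := by
    rw [hu_def, ← Real.exp_add]
    congr 1
    field_simp
    ring
  rcases le_or_gt n t with hcase | hcase
  · -- n ≤ t
    have hu0 : 0 ≤ u := by
      rw [hu_def]
      exact div_nonneg (by linarith) hn0.le
    have h1 : 1 + u + u^2/2 + u^3/6 ≤ Real.exp u := cubic_le_exp hu0
    have h2 : n * (1 + u + u^2/2 + u^3/6)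
        = t + ((t-n)^2/(2*n) + (t-n)^3/(6*n^2)) := by
      rw [hu_def]; field_simp; ring
    have h3 : δ^2/(2*t) ≤ (t-n)^2/(2*n) + (t-n)^3/(6*n^2) := by
      have k1 : δ^2/(2*t) ≤ (t-n)^2/(2*n) := by
        apply div_le_div₀ (by positivity) hd (by positivity)
        linarith
      have k2 : (0:ℝ) ≤ (t-n)^3/(6*n^2) := by
        have : (0:ℝ) ≤ t - n := by linarith
        positivity
      linarith
    have h4 : t + δ^2/(2*t) ≤ n * Real.exp u := by
      linarith [mul_le_mul_of_nonneg_left h1 hn0.le, h2, h3]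
    rw [hexp, ← mul_assoc]
    have h5 := mul_le_mul_of_nonneg_left h4 hE0.le
    have h6 : Real.exp 1 * (t + δ^2/(2*t)) = Real.exp 1 * t + Real.exp 1 * δ^2/(2*t) := by
      ring
    have h7 : Real.exp 1 * (n * Real.exp u) = n * Real.exp 1 * Real.exp u := by ring
    have h9 : (0:ℝ) < 9/t^2 := by positivity
    linarith
  · -- t < n
    rcases le_or_gt (3*t) n with hfar | hnear
    · -- n ≥ 3t : crude bound
      have hexp1 : (1:ℝ) ≤ Real.exp (t/n) := Real.one_le_exp (by positivity)
      have hng : 3*t ≤ n * Real.exp (t/n) := by nlinarith [mul_le_mul_of_nonneg_left hexp1 (show (0:ℝ) ≤ n by linarith)]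
      have hA : Real.exp 1 * δ^2 ≤ 3/4 := by nlinarith [mul_le_mul_of_nonneg_left hδ2 hE0.le]
      have hB : Real.exp 1 * δ^2/(2*t) ≤ (3/4)/(2*t) :=
        div_le_div_of_nonneg_right hA (by positivity)
      have hC : (3/4:ℝ)/(2*t) ≤ 3/16 := by
        rw [div_le_iff₀ (by positivity)]; linarith
      have hD : Real.exp 1 * t ≤ 2.7182818286 * t := by nlinarith [mul_le_mul_of_nonneg_right hE1.le ht0.le]
      have h9 : (0:ℝ) < 9/t^2 := by positivity
      linarith
    · -- t < n < 3t
      have hu1 : |u| ≤ 1 := by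
        rw [abs_le, hu_def]
        constructor
        · rw [le_div_iff₀ hn0]; linarith
        · rw [div_le_iff₀ hn0]; linarith
      have h1 : 1 + u + u^2/2 + u^3/6 - 5/96*u^4 ≤ Real.exp u := by
        have := exp_cubic_bound hu1
        rw [abs_le] at this
        linarith [this.2]
      have h2 : n * (1 + u + u^2/2 + u^3/6 - 5/96*u^4)
          = t + (48*n^2*(t-n)^2 + 16*n*(t-n)^3 - 5*(t-n)^4)/(96*n^3) := by
        rw [hu_def]
        field_simp
        ring
      have hpoly : 48*δ^2*n^3*t
          ≤ (48*n^2*(t-n)^2 + 16*n*(t-n)^3 - 5*(t-n)^4)*t^2 + 288*n^3 := by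
        obtain ⟨a, ha⟩ : ∃ a, a = n - t := ⟨_, rfl⟩
        have geq : (48*n^2*(t-n)^2 + 16*n*(t-n)^3 - 5*(t-n)^4)*t^2 + 288*n^3
            = (48*n^2*a^2 - 16*n*a^3 - 5*a^4)*t^2 + 288*n^3 := by rw [ha]; ring
        have e2 : a^2 = (t-n)^2 := by rw [ha]; ring
        have hd2 : δ^2 ≤ a^2 := by rw [e2]; exact hd
        have ha0 : 0 ≤ a := by rw [ha]; linarith
        have han : n = t + a := by rw [ha]; ring
        rw [geq]
        rcases le_or_gt a 1 with hsm | hbg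
        · -- a ≤ 1
          have ha3 : a^3 ≤ 1 := by nlinarith [sq_nonneg a, mul_nonneg ha0 ha0]
          have ha4 : a^4 ≤ 1 := by nlinarith [ha3, sq_nonneg a, mul_nonneg (mul_nonneg ha0 ha0) ha0]
          have c1 : 48*δ^2*n^3*t ≤ 48*a^2*n^3*t := by linarith [mul_le_mul_of_nonneg_right hd2 (show (0:ℝ) ≤ 48*n^3*t by positivity)]
          have c2 : 48*a^2*n^3*t = 48*a^2*n^2*t^2 + 48*a^3*n^2*t := by rw [han]; ring
          have c3 : 48*a^3*n^2*t ≤ 48*n^2*t := by linarith [mul_le_mul_of_nonneg_right ha3 (show (0:ℝ) ≤ 48*n^2*t by positivity)]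
          have c4 : 48*n^2*t ≤ 48*n^3 := by linarith [mul_le_mul_of_nonneg_right hcase.le (show (0:ℝ) ≤ 48*n^2 by positivity)]
          have c5 : 16*n*a^3*t^2 ≤ 16*n*t^2 := by linarith [mul_le_mul_of_nonneg_right ha3 (show (0:ℝ) ≤ 16*n*t^2 by positivity)]
          have ct : t^2 ≤ n^2 := by nlinarith [mul_le_mul hcase.le hcase.le ht0.le hn0.le]
          have c6 : 16*n*t^2 ≤ 16*n^3 := by linarith [mul_le_mul_of_nonneg_right ct (show (0:ℝ) ≤ 16*n by positivity)]
          have c7 : 5*a^4*t^2 ≤ 5*t^2 := by linarith [mul_le_mul_of_nonneg_right ha4 (show (0:ℝ) ≤ 5*t^2 by positivity)]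
          have c8 : 5*t^2 ≤ 5*n^3 := by nlinarith [ct, mul_le_mul_of_nonneg_left hn (sq_nonneg n)]
          have c9 : (0:ℝ) ≤ n^3 := by positivity
          linarith
        · -- a ≥ 1, n < 3t
          have ha23 : a ≤ 2/3*n := by rw [ha]; linarith
          have c1 : 48*δ^2*n^3*t ≤ 12*n^3*t := by linarith [mul_le_mul_of_nonneg_right hδ2 (show (0:ℝ) ≤ 48*n^3*t by positivity)]
          have hta : t ≤ a*t := by nlinarith [mul_le_mul_of_nonneg_right hbg.le ht0.le]
          have hat : a ≤ a*t := by nlinarith [mul_le_mul_of_nonneg_left ht ha0]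
          have hn2a : n ≤ 2*a*t := by rw [han]; linarith
          have c2 : 12*n^3*t ≤ 24*a*n^2*t^2 := by linarith [mul_le_mul_of_nonneg_right hn2a (show (0:ℝ) ≤ 12*n^2*t by positivity)]
          have c3 : 24*a*n^2*t^2 ≤ 24*a^2*n^2*t^2 := by linarith [mul_le_mul_of_nonneg_right hbg.le (show (0:ℝ) ≤ 24*a*n^2*t^2 by positivity)]
          have hna : (0:ℝ) ≤ 13*n^2 - 16*n*a - 5*a^2 := by
            nlinarith [mul_le_mul_of_nonneg_left ha23 hn0.le,
              mul_le_mul ha23 ha23 ha0 (by positivity : (0:ℝ) ≤ 2/3*n)]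
          have c5 : 16*n*a^3 + 5*a^4 ≤ 13*a^2*n^2 := by
            linarith [mul_nonneg (sq_nonneg a) hna]
          have c6 : (16*n*a^3 + 5*a^4)*t^2 ≤ 13*a^2*n^2*t^2 := by
            linarith [mul_le_mul_of_nonneg_right c5 (sq_nonneg t)]
          have c7 : (0:ℝ) ≤ a^2*n^2*t^2 := by positivity
          have c8 : (0:ℝ) ≤ n^3 := by positivity
          linarith
      have h3 : δ^2/(2*t) - 3/t^2
          ≤ (48*n^2*(t-n)^2 + 16*n*(t-n)^3 - 5*(t-n)^4)/(96*n^3) := by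
        have hden : (0:ℝ) < 96*n^3*t^2 := by positivity
        calc δ^2/(2*t) - 3/t^2 = (48*δ^2*n^3*t - 288*n^3)/(96*n^3*t^2) := by
              field_simp; ring
          _ ≤ ((48*n^2*(t-n)^2 + 16*n*(t-n)^3 - 5*(t-n)^4)*t^2)/(96*n^3*t^2) := by
              gcongr
              linarith
          _ = (48*n^2*(t-n)^2 + 16*n*(t-n)^3 - 5*(t-n)^4)/(96*n^3) := by
              rw [mul_comm (96*n^3) (t^2), mul_comm _ (t^2), mul_div_mul_left _ _ (by positivity : (t:ℝ)^2 ≠ 0)]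
      have h4 : t + (δ^2/(2*t) - 3/t^2) ≤ n * Real.exp u := by
        linarith [mul_le_mul_of_nonneg_left h1 hn0.le, h2, h3]
      have h5 := mul_le_mul_of_nonneg_left h4 hE0.le
      rw [hexp, ← mul_assoc]
      have e1 : Real.exp 1 * (t + (δ^2/(2*t) - 3/t^2))
          = Real.exp 1 * t + Real.exp 1 * δ^2/(2*t) - (Real.exp 1*3)/t^2 := by ring
      have e2 : Real.exp 1 * (n * Real.exp u) = n * Real.exp 1 * Real.exp u := by ring
      have e3 : (Real.exp 1*3)/t^2 ≤ 9/t^2 := by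
        gcongr
        linarith
      linarith

set_option maxHeartbeats 1000000 in
lemma upper_bound {t m δ : ℝ} (ht : 2 ≤ t) (hδ : |δ| ≤ 1/2) (hm : m = t - δ) :
    m * Real.exp (t/m) ≤ Real.exp 1 * t + Real.exp 1 * δ^2/(2*t) + 9/t^2 := by
  obtain ⟨hδl, hδr⟩ := abs_le.mp hδ
  have ht0 : (0:ℝ) < t := by linarith
  have hm32 : 3/2 ≤ m := by rw [hm]; linarith
  have hm0 : (0:ℝ) < m := by linarith
  have hE1 : Real.exp 1 < 2.7182818286 := Real.exp_one_lt_d9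
  have hE0 : (0:ℝ) < Real.exp 1 := Real.exp_pos 1
  have htm : t = m + δ := by rw [hm]; ring
  obtain ⟨u, hu_def⟩ : ∃ u, u = δ/m := ⟨_, rfl⟩
  have hexp : Real.exp (t/m) = Real.exp 1 * Real.exp u := by
    rw [hu_def, ← Real.exp_add]
    congr 1
    field_simp
    linarith
  have hu1 : |u| ≤ 1 := by
    rw [hu_def, abs_div, abs_of_pos hm0, div_le_one hm0]
    linarith
  have h1 : Real.exp u ≤ 1 + u + u^2/2 + u^3/6 + 5/96*u^4 := by
    have := abs_le.mp (exp_cubic_bound hu1)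
    linarith [this.1]
  have h2 : m * (1 + u + u^2/2 + u^3/6 + 5/96*u^4)
      = (m + δ) + (48*m^2*δ^2 + 16*m*δ^3 + 5*δ^4)/(96*m^3) := by
    rw [hu_def]
    field_simp
    ring
  have hδ2 : δ^2 ≤ 1/4 := by nlinarith
  have hδ3 : δ^3 ≤ 1/8 := by nlinarith
  have hδ4 : δ^4 ≤ 1/16 := by nlinarith
  have ht43 : t ≤ 4/3*m := by linarith
  have htt : t^2 ≤ 16/9*m^2 := by nlinarith
  have hm23 : m^2 ≤ 2/3*m^3 := by nlinarith [sq_nonneg m]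
  have hpoly : (48*m^2*δ^2 + 16*m*δ^3 + 5*δ^4)*t^2 ≤ 48*δ^2*m^3*t + 288*m^3 := by
    have d1 : 48*m^2*δ^2*t^2 - 48*δ^2*m^3*t = 48*δ^3*m^2*t := by rw [htm]; ring
    have d2 : 48*δ^3*m^2*t ≤ 6*m^2*t := by
      linarith [mul_le_mul_of_nonneg_right hδ3 (show (0:ℝ) ≤ 48*m^2*t by positivity)]
    have d3 : 6*m^2*t ≤ 8*m^3 := by
      linarith [mul_le_mul_of_nonneg_right ht43 (show (0:ℝ) ≤ 6*m^2 by positivity)]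
    have d4 : 16*m*δ^3*t^2 ≤ 2*m*t^2 := by
      linarith [mul_le_mul_of_nonneg_right hδ3 (show (0:ℝ) ≤ 16*m*t^2 by positivity)]
    have d5 : 2*m*t^2 ≤ 4*m^3 := by
      nlinarith [mul_le_mul_of_nonneg_left htt (show (0:ℝ) ≤ 2*m by positivity)]
    have d6 : 5*δ^4*t^2 ≤ m^3 := by
      nlinarith [mul_le_mul_of_nonneg_right hδ4 (show (0:ℝ) ≤ 5*t^2 by positivity), htt, hm23]
    have d0 : (0:ℝ) ≤ m^3 := by positivity
    linarith
  have h3 : (48*m^2*δ^2 + 16*m*δ^3 + 5*δ^4)/(96*m^3) ≤ δ^2/(2*t) + 3/t^2 := by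
    have hden : (0:ℝ) < 96*m^3*t^2 := by positivity
    calc (48*m^2*δ^2 + 16*m*δ^3 + 5*δ^4)/(96*m^3)
        = ((48*m^2*δ^2 + 16*m*δ^3 + 5*δ^4)*t^2)/(96*m^3*t^2) := by
          rw [mul_div_mul_right _ _ (by positivity : (t:ℝ)^2 ≠ 0)]
      _ ≤ (48*δ^2*m^3*t + 288*m^3)/(96*m^3*t^2) := by
          gcongr
      _ = δ^2/(2*t) + 3/t^2 := by
          field_simp
          ring
  have h4 : m * Real.exp u ≤ t + (δ^2/(2*t) + 3/t^2) := by
    linarith [mul_le_mul_of_nonneg_left h1 hm0.le, h2, h3]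
  have h5 := mul_le_mul_of_nonneg_left h4 hE0.le
  rw [hexp]
  have e1 : Real.exp 1 * (t + (δ^2/(2*t) + 3/t^2))
      = Real.exp 1 * t + Real.exp 1 * δ^2/(2*t) + (Real.exp 1*3)/t^2 := by ring
  have e2 : m * (Real.exp 1 * Real.exp u) = Real.exp 1 * (m * Real.exp u) := by ring
  have e3 : (Real.exp 1*3)/t^2 ≤ 9/t^2 := by
    gcongr
    linarith
  linarith

lemma round_min (t : ℝ) (k : ℤ) : |t - (round t : ℝ)| ≤ |t - (k:ℝ)| := by
  rcases eq_or_ne k (round t) with h | h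
  · rw [h]
  · have h1 : (1:ℝ) ≤ |(round t : ℝ) - (k:ℝ)| := by
      have : (1:ℤ) ≤ |round t - k| := Int.one_le_abs (sub_ne_zero.mpr (Ne.symm h))
      exact_mod_cast this
    have h2 : |t - (round t : ℝ)| ≤ 1/2 := abs_sub_round t
    have h3 : |(round t : ℝ) - (k:ℝ)| ≤ |(round t:ℝ) - t| + |t - (k:ℝ)| := abs_sub_le _ _ _
    have h4 : |(round t:ℝ) - t| = |t - (round t:ℝ)| := abs_sub_comm _ _
    linarith

theorem amgm_envelope_asymptotics (f : ℝ → ℝ)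
    (hf : ∀ x : ℝ, 1 < x →
      f x = sInf { y : ℝ | ∃ n : ℕ, 1 ≤ n ∧ y = (n : ℝ) * x ^ ((1 : ℝ) / n) }) :
    ∃ C > 0, ∃ x₀ > 1, ∀ x ≥ x₀,
      |f x - Real.exp 1 * Real.log x -
          Real.exp 1 * |Real.log x - (round (Real.log x) : ℝ)| ^ 2 / (2 * Real.log x)| ≤
        C / (Real.log x) ^ 2 := by
  refine ⟨9, by norm_num, Real.exp 2, ?_, ?_⟩
  · calc (1:ℝ) = Real.exp 0 := Real.exp_zero.symm
      _ < Real.exp 2 := Real.exp_lt_exp.mpr (by norm_num)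
  intro x hx
  have hx1 : (1:ℝ) < x := by
    calc (1:ℝ) = Real.exp 0 := Real.exp_zero.symm
      _ < Real.exp 2 := Real.exp_lt_exp.mpr (by norm_num)
      _ ≤ x := hx
  have hx0 : (0:ℝ) < x := by linarith
  set t := Real.log x with ht_def
  have ht2 : 2 ≤ t := by
    rw [ht_def]
    exact (Real.le_log_iff_exp_le hx0).mpr hx
  have ht0 : (0:ℝ) < t := by linarith
  have hfx := hf x hx1
  have hxn : ∀ n : ℕ, 1 ≤ n → (n:ℝ) * x ^ ((1:ℝ)/(n:ℝ)) = (n:ℝ) * Real.exp (t/(n:ℝ)) := by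
    intro n hn1
    rw [Real.rpow_def_of_pos hx0, mul_one_div, ht_def]
  have hbdd : BddBelow { y : ℝ | ∃ n : ℕ, 1 ≤ n ∧ y = (n : ℝ) * x ^ ((1 : ℝ) / n) } := by
    refine ⟨0, ?_⟩
    rintro y ⟨n, hn1, rfl⟩
    exact mul_nonneg (Nat.cast_nonneg n) (Real.rpow_nonneg hx0.le _)
  have hne : { y : ℝ | ∃ n : ℕ, 1 ≤ n ∧ y = (n : ℝ) * x ^ ((1 : ℝ) / n) }.Nonempty :=
    ⟨((1:ℕ):ℝ) * x ^ ((1:ℝ)/((1:ℕ):ℝ)), 1, le_rfl, rfl⟩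
  set δ := t - (round t : ℝ) with hδ_def
  have hδ : |δ| ≤ 1/2 := abs_sub_round t
  -- the integer m = round t
  have hmr : (3:ℝ)/2 ≤ (round t : ℝ) := by
    have := abs_le.mp hδ
    linarith [this.2]
  have hm0 : (0:ℤ) < round t := by exact_mod_cast (show (0:ℝ) < (round t:ℝ) by linarith)
  have hn₀ : 1 ≤ (round t).toNat := by omega
  have hcast : (((round t).toNat : ℕ) : ℝ) = ((round t : ℤ) : ℝ) := by
    exact_mod_cast Int.toNat_of_nonneg hm0.le
  -- upper bound
  have hupper : f x ≤ Real.exp 1 * t + Real.exp 1 * δ^2/(2*t) + 9/t^2 := by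
    have hmem : (((round t).toNat : ℕ):ℝ) * x ^ ((1:ℝ)/((round t).toNat : ℕ))
        ∈ { y : ℝ | ∃ n : ℕ, 1 ≤ n ∧ y = (n : ℝ) * x ^ ((1 : ℝ) / n) } :=
      ⟨(round t).toNat, hn₀, rfl⟩
    have hle : f x ≤ (((round t).toNat : ℕ):ℝ) * x ^ ((1:ℝ)/((round t).toNat : ℕ)) := by
      rw [hfx]; exact csInf_le hbdd hmem
    rw [hxn _ hn₀, hcast] at hle
    calc f x ≤ ((round t : ℤ) : ℝ) * Real.exp (t/((round t : ℤ):ℝ)) := hle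
      _ ≤ Real.exp 1 * t + Real.exp 1 * δ^2/(2*t) + 9/t^2 :=
          upper_bound ht2 hδ (by rw [hδ_def]; ring)
  -- lower bound
  have hlower : Real.exp 1 * t + Real.exp 1 * δ^2/(2*t) - 9/t^2 ≤ f x := by
    rw [hfx]
    apply le_csInf hne
    rintro y ⟨n, hn1, rfl⟩
    rw [hxn n hn1]
    apply lower_bound ht2 (by exact_mod_cast hn1) hδ
    have habs : |t - (round t : ℝ)| ≤ |t - ((n:ℕ):ℝ)| := by
      have := round_min t (n : ℤ)
      push_cast at this ⊢
      exact this
    have := pow_le_pow_left₀ (abs_nonneg _) habs 2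
    rw [sq_abs, sq_abs] at this
    exact this
  have hsq : |t - (round t : ℝ)|^2 = δ^2 := by rw [hδ_def, sq_abs]
  rw [abs_le]
  constructor
  · rw [hsq]
    linarith
  · rw [hsq]
    linarith
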